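/- For constants $\alpha, k_B > 0$ and any symmetric positive-definite matrix $C\in\mathcal{S}^3_{>0}$, any $\theta>0$, $K(\theta)>0$, $\rho>0$, $\zeta>0$, $\kappa>0$ and any vector $q\in\mathbb{R}^3$, the entropy production $\xi = \frac{|q|^2}{\kappa\theta^2} + \frac{2\alpha\rho}{\zeta\theta}\operatorname{tr}\big((K(\theta)I - k_B\theta C^{-1})(K(\theta)C - k_B\theta I)\big)$ is nonnegative; moreover $\xi = \frac{|q|^2}{\kappa\theta^2} + \frac{2\alpha\rho}{\zeta\theta}\|K(\theta)C^{1/2} - k_B\theta C^{-1/2}\|^2$ where $\|\cdot\|$ is the Frobenius norm. -/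

import Mathlib

open Matrix

/-- The square root of a positive semidefinite matrix, as `Matrix.PosSemidef.sqrt` was defined
in Mathlib of December 2024 (since removed in favour of `CFC.sqrt`). -/
noncomputable def posSemidefSqrtOld {n : Type*} [Fintype n]
    [DecidableEq n] {A : Matrix n n ℝ} (hA : A.PosSemidef) : Matrix n n ℝ :=
  (hA.1.eigenvectorUnitary : Matrix n n ℝ) * diagonal ((RCLike.ofReal : ℝ → ℝ) ∘ Real.sqrt ∘ hA.1.eigenvalues) *
    (star hA.1.eigenvectorUnitary : Matrix n n ℝ)

/-- For constants `α, k_B > 0`, a symmetric positive-definite `C`, `θ > 0`,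
`K θ > 0`, `ρ, ζ, κ > 0` and `q ∈ ℝ³`, the entropy production
`ξ = |q|²/(κθ²) + (2αρ/(ζθ)) tr((K(θ)I - k_B θ C⁻¹)(K(θ)C - k_B θ I))`
is nonnegative, and equals
`|q|²/(κθ²) + (2αρ/(ζθ)) ‖K(θ) C^{1/2} - k_B θ C^{-1/2}‖²` (Frobenius norm). -/
theorem stmt10 (α kB : ℝ) (hα : 0 < α) (hkB : 0 < kB)
    (C : Matrix (Fin 3) (Fin 3) ℝ) (hC : C.PosDef)
    (θ Kθ ρ ζ κ : ℝ) (hθ : 0 < θ) (hK : 0 < Kθ) (hρ : 0 < ρ) (hζ : 0 < ζ) (hκ : 0 < κ)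
    (q : EuclideanSpace ℝ (Fin 3)) :
    0 ≤ ‖q‖ ^ 2 / (κ * θ ^ 2)
        + 2 * α * ρ / (ζ * θ)
          * ((Kθ • (1 : Matrix (Fin 3) (Fin 3) ℝ) - (kB * θ) • C⁻¹)
              * (Kθ • C - (kB * θ) • (1 : Matrix (Fin 3) (Fin 3) ℝ))).trace ∧
      ‖q‖ ^ 2 / (κ * θ ^ 2)
          + 2 * α * ρ / (ζ * θ)
            * ((Kθ • (1 : Matrix (Fin 3) (Fin 3) ℝ) - (kB * θ) • C⁻¹)
                * (Kθ • C - (kB * θ) • (1 : Matrix (Fin 3) (Fin 3) ℝ))).trace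
        = ‖q‖ ^ 2 / (κ * θ ^ 2)
            + 2 * α * ρ / (ζ * θ)
              * ∑ i, ∑ j,
                  ((Kθ • (posSemidefSqrtOld hC.posSemidef) - (kB * θ) • ((posSemidefSqrtOld hC.posSemidef))⁻¹) i j) ^ 2 := by
  set S := posSemidefSqrtOld hC.posSemidef with hSdef
  have hSS : S * S = C := by
    have hU := Unitary.coe_star_mul_self hC.posSemidef.1.eigenvectorUnitary
    have hsp := hC.posSemidef.1.spectral_theorem
    rw [Unitary.conjStarAlgAut_apply] at hsp
    rw [hSdef, posSemidefSqrtOld]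
    calc _ = (hC.posSemidef.1.eigenvectorUnitary : Matrix (Fin 3) (Fin 3) ℝ)
          * (diagonal ((RCLike.ofReal : ℝ → ℝ) ∘ Real.sqrt ∘ hC.posSemidef.1.eigenvalues)
            * ((star hC.posSemidef.1.eigenvectorUnitary : Matrix (Fin 3) (Fin 3) ℝ)
              * (hC.posSemidef.1.eigenvectorUnitary : Matrix (Fin 3) (Fin 3) ℝ))
            * diagonal ((RCLike.ofReal : ℝ → ℝ) ∘ Real.sqrt ∘ hC.posSemidef.1.eigenvalues))
          * (star hC.posSemidef.1.eigenvectorUnitary : Matrix (Fin 3) (Fin 3) ℝ) := by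
            simp only [Matrix.mul_assoc]
      _ = C := by
            rw [hU, Matrix.mul_one, diagonal_mul_diagonal]
            conv_rhs => rw [hsp]
            congr 3
            funext i
            simp [Real.mul_self_sqrt (hC.posSemidef.eigenvalues_nonneg i)]
  have hdetC : C.det ≠ 0 := hC.det_pos.ne'
  have hdetS : S.det ≠ 0 := by
    intro h
    apply hdetC
    rw [← hSS, Matrix.det_mul, h, mul_zero]
  have hSinv : S⁻¹ * S = 1 := Matrix.nonsing_inv_mul S hdetS.isUnit
  have hSinv' : S * S⁻¹ = 1 := Matrix.mul_nonsing_inv S hdetS.isUnit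
  have hCinv : C⁻¹ = S⁻¹ * S⁻¹ := by
    rw [← hSS, Matrix.mul_inv_rev]
  have hSym : S.transpose = S := by
    rw [hSdef, posSemidefSqrtOld]
    simp only [Matrix.transpose_mul, Matrix.diagonal_transpose, Matrix.mul_assoc,
      Matrix.star_eq_conjTranspose, Matrix.conjTranspose_eq_transpose_of_trivial,
      Matrix.transpose_transpose]
  have hSymInv : (S⁻¹).transpose = S⁻¹ := by
    rw [Matrix.transpose_nonsing_inv, hSym]
  set M := Kθ • S - (kB * θ) • S⁻¹ with hMdef
  have hMsym : M.transpose = M := by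
    rw [hMdef, Matrix.transpose_sub, Matrix.transpose_smul, Matrix.transpose_smul, hSym, hSymInv]
  have htr : ((Kθ • (1 : Matrix (Fin 3) (Fin 3) ℝ) - (kB * θ) • C⁻¹)
              * (Kθ • C - (kB * θ) • (1 : Matrix (Fin 3) (Fin 3) ℝ))).trace
      = ∑ i, ∑ j, (M i j) ^ 2 := by
    have hmat : (Kθ • (1 : Matrix (Fin 3) (Fin 3) ℝ) - (kB * θ) • C⁻¹)
              * (Kθ • C - (kB * θ) • (1 : Matrix (Fin 3) (Fin 3) ℝ))
        = M.transpose * M := by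
      have hSC : S⁻¹ * C = S := by rw [← hSS, ← Matrix.mul_assoc, hSinv, Matrix.one_mul]
      rw [hMsym, hMdef, hCinv]
      simp only [Matrix.sub_mul, Matrix.mul_sub, smul_mul_assoc, mul_smul_comm,
        Matrix.one_mul, Matrix.mul_one, hSS, hSinv, hSinv', Matrix.mul_assoc, hSC]
    rw [hmat]
    simp only [Matrix.trace, Matrix.diag, Matrix.mul_apply, Matrix.transpose_apply, sq]
    rw [Finset.sum_comm]
  have hsum : 0 ≤ ∑ i, ∑ j, (M i j) ^ 2 :=
    Finset.sum_nonneg fun i _ => Finset.sum_nonneg fun j _ => sq_nonneg _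
  have hcoef : 0 ≤ 2 * α * ρ / (ζ * θ) := by positivity
  constructor
  · have h1 : 0 ≤ ‖q‖ ^ 2 / (κ * θ ^ 2) := by positivity
    rw [htr]
    exact add_nonneg h1 (mul_nonneg hcoef hsum)
  · rw [htr]
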